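/- Let GMA(M,C,D) = min_{1≤x≤ℓ} ( ∏_{k=1}^{x-1}(M_k/C_k) · M_x · ∏_{k=x+1}^{ℓ}(M_k/D_k) ) with all M_k, C_k, D_k > 0. Fix an index n and δ > 0, and replace (M_n, C_n, D_n) by (M_n+δ, C_n+δ, D_n+δ), keeping all other values. If M_n ≤ C_n and M_n ≤ D_n, then the value of GMA does not decrease. -/
import Mathlib


noncomputable def gmaTerm (M C D : ℕ → ℝ) (ℓ x : ℕ) : ℝ :=
  (∏ k ∈ Finset.Ico 1 x, M k / C k) * M x * ∏ k ∈ Finset.Icc (x + 1) ℓ, M k / D k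

private lemma frac_mono {m d δ : ℝ} (hd : 0 < d) (hδ : 0 < δ)
    (h : m ≤ d) : m / d ≤ (m + δ) / (d + δ) := by
  rw [div_le_div_iff₀ hd (by linarith)]
  nlinarith

theorem gma_monotonic (ℓ : ℕ) (hℓ : 1 ≤ ℓ) (M C D : ℕ → ℝ)
    (hM : ∀ k, 0 < M k) (hC : ∀ k, 0 < C k) (hD : ∀ k, 0 < D k)
    (n : ℕ) (hn : n ∈ Finset.Icc 1 ℓ) (δ : ℝ) (hδ : 0 < δ)
    (hMCn : M n ≤ C n) (hMDn : M n ≤ D n) :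
    (Finset.Icc 1 ℓ).inf' (Finset.nonempty_Icc.mpr hℓ) (gmaTerm M C D ℓ) ≤
      (Finset.Icc 1 ℓ).inf' (Finset.nonempty_Icc.mpr hℓ)
        (gmaTerm (fun k => if k = n then M k + δ else M k)
                 (fun k => if k = n then C k + δ else C k)
                 (fun k => if k = n then D k + δ else D k) ℓ) := by
  rw [Finset.le_inf'_iff]
  intro x hx
  refine le_trans (Finset.inf'_le _ hx) ?_
  unfold gmaTerm
  have h1 : ∏ k ∈ Finset.Ico 1 x, M k / C k ≤
      ∏ k ∈ Finset.Ico 1 x, (if k = n then M k + δ else M k) /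
        (if k = n then C k + δ else C k) := by
    apply Finset.prod_le_prod
    · intro k _; exact le_of_lt (div_pos (hM k) (hC k))
    · intro k _
      by_cases hk : k = n
      · subst hk; simp only [if_pos rfl]; exact frac_mono (hC k) hδ hMCn
      · simp [hk]
  have h2 : M x ≤ if x = n then M x + δ else M x := by
    by_cases hx' : x = n <;> simp [hx'] <;> linarith
  have h3 : ∏ k ∈ Finset.Icc (x + 1) ℓ, M k / D k ≤
      ∏ k ∈ Finset.Icc (x + 1) ℓ, (if k = n then M k + δ else M k) /
        (if k = n then D k + δ else D k) := by
    apply Finset.prod_le_prod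
    · intro k _; exact le_of_lt (div_pos (hM k) (hD k))
    · intro k _
      by_cases hk : k = n
      · subst hk; simp only [if_pos rfl]; exact frac_mono (hD k) hδ hMDn
      · simp [hk]
  have p1 : (0:ℝ) ≤ ∏ k ∈ Finset.Ico 1 x, M k / C k :=
    Finset.prod_nonneg fun k _ => le_of_lt (div_pos (hM k) (hC k))
  have p3 : (0:ℝ) ≤ ∏ k ∈ Finset.Icc (x + 1) ℓ, M k / D k :=
    Finset.prod_nonneg fun k _ => le_of_lt (div_pos (hM k) (hD k))
  have h2' : (0:ℝ) ≤ if x = n then M x + δ else M x :=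
    le_trans (le_of_lt (hM x)) h2
  apply mul_le_mul
  · exact mul_le_mul h1 h2 (le_of_lt (hM x)) (le_trans p1 h1)
  · exact h3
  · exact p3
  · exact mul_nonneg (le_trans p1 h1) h2'
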